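/- Consider the abstract evolution problem B U' + A U = F on a finite-dimensional real inner product space, where B is symmetric positive definite and A is symmetric positive definite and invertible. Then any differentiable solution U satisfies ⟨B U(t), U(t)⟩ ≤ ⟨B U(0), U(0)⟩ + (1/2)∫₀ᵗ ⟨A⁻¹ F(s), F(s)⟩ ds for all t ≥ 0. -/

import Mathlib

open RealInnerProductSpace

theorem evolution_energy_estimate
    {H : Type*} [NormedAddCommGroup H] [InnerProductSpace ℝ H]
    [FiniteDimensional ℝ H]
    (B A Ainv : H →L[ℝ] H)
    (hBsym : ∀ x y : H, ⟪B x, y⟫ = ⟪x, B y⟫)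
    (hAsym : ∀ x y : H, ⟪A x, y⟫ = ⟪x, A y⟫)
    (hBpos : ∀ x : H, 0 ≤ ⟪B x, x⟫)
    (hApos : ∀ x : H, 0 ≤ ⟪A x, x⟫)
    (hleft : ∀ x : H, Ainv (A x) = x) (hright : ∀ x : H, A (Ainv x) = x)
    (hAinvsym : ∀ x y : H, ⟪Ainv x, y⟫ = ⟪x, Ainv y⟫)
    (hAinvpos : ∀ x : H, 0 ≤ ⟪Ainv x, x⟫)
    (U U' : ℝ → H) (F : ℝ → H) (hF : Continuous F)
    (hU : ∀ t : ℝ, HasDerivAt U (U' t) t)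
    (heq : ∀ t : ℝ, 0 ≤ t → B (U' t) + A (U t) = F t) :
    ∀ t : ℝ, 0 ≤ t →
      ⟪B (U t), U t⟫ ≤ ⟪B (U 0), U 0⟫
        + (1 / 2) * ∫ s in (0 : ℝ)..t, ⟪Ainv (F s), F s⟫ := by
  set g : ℝ → ℝ := fun s => ⟪Ainv (F s), F s⟫ with hg
  have hgcont : Continuous g := Continuous.inner ((Ainv.continuous).comp hF) hF
  set E : ℝ → ℝ := fun t => ⟪B (U t), U t⟫ with hE
  have hEderiv : ∀ t : ℝ, HasDerivAt E (2 * ⟪B (U' t), U t⟫) t := by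
    intro t
    have hBU : HasDerivAt (fun s => B (U s)) (B (U' t)) t :=
      (B.hasFDerivAt.comp_hasDerivAt t (hU t))
    have h2 := hBU.inner ℝ (hU t)
    refine h2.congr_deriv ?_
    have h3 : ⟪B (U t), U' t⟫ = ⟪B (U' t), U t⟫ := by
      rw [hBsym, real_inner_comm]
    rw [h3]; ring
  set φ : ℝ → ℝ := fun t => E 0 + (1 / 2) * (∫ s in (0:ℝ)..t, g s) - E t with hφ
  have hφderiv : ∀ t : ℝ, HasDerivAt φ ((1/2) * g t - 2 * ⟪B (U' t), U t⟫) t := by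
    intro t
    have h1 : HasDerivAt (fun u => ∫ s in (0:ℝ)..u, g s) (g t) t :=
      (hgcont.integral_hasStrictDerivAt 0 t).hasDerivAt
    exact ((h1.const_mul (1/2)).const_add (E 0)).sub (hEderiv t)
  intro t ht
  have key : ∀ x : ℝ, 0 ≤ x → 0 ≤ (1/2) * g x - 2 * ⟪B (U' x), U x⟫ := by
    intro x hx
    have hB : B (U' x) = F x - A (U x) := by
      have h := heq x hx
      have := congrArg (fun z => z - A (U x)) h
      simpa using this
    have hpos := hApos ((1/2:ℝ) • Ainv (F x) - U x)
    have hAw : A ((1/2:ℝ) • Ainv (F x) - U x) = (1/2:ℝ) • F x - A (U x) := by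
      simp [map_sub, map_smul, hright]
    rw [hAw] at hpos
    have hcross : ⟪A (U x), Ainv (F x)⟫ = ⟪F x, U x⟫ := by
      rw [hAsym, hright, real_inner_comm]
    have hcomm : ⟪F x, Ainv (F x)⟫ = ⟪Ainv (F x), F x⟫ := real_inner_comm _ _
    have hexp : ⟪(1/2:ℝ) • F x - A (U x), (1/2:ℝ) • Ainv (F x) - U x⟫
        = (1/4) * ⟪Ainv (F x), F x⟫ - ⟪F x, U x⟫ + ⟪A (U x), U x⟫ := by
      simp only [inner_sub_left, inner_sub_right, real_inner_smul_left,
        real_inner_smul_right, hcross, hcomm]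
      ring
    rw [hexp] at hpos
    have hsplit : ⟪B (U' x), U x⟫ = ⟪F x, U x⟫ - ⟪A (U x), U x⟫ := by
      rw [hB, inner_sub_left]
    rw [hsplit]
    simp only [hg]
    linarith
  have hmono : MonotoneOn φ (Set.Icc 0 t) := by
    apply monotoneOn_of_deriv_nonneg (convex_Icc 0 t)
    · exact (Differentiable.continuous fun x => (hφderiv x).differentiableAt).continuousOn
    · intro x _
      exact ((hφderiv x).differentiableAt).differentiableWithinAt
    · intro x hx
      rw [interior_Icc] at hx
      rw [(hφderiv x).deriv]
      exact key x hx.1.le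
  have h0 : φ 0 ≤ φ t :=
    hmono ⟨le_refl 0, ht⟩ ⟨ht, le_refl t⟩ ht
  have hφ0 : φ 0 = 0 := by simp [hφ]
  rw [hφ0] at h0
  simp only [hφ, hE, hg] at h0 ⊢
  linarith
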